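/- Let d₁, d₂ ∈ ℝ² be linearly independent and let u, k, h : ℝ² → ℝ be smooth (C^∞) periodic functions. If Δ(e^{2u(ξ)}·Δh(ξ)) = div(k(ξ)²·∇h(ξ)) for all ξ ∈ ℝ², then h is constant. (This is the kernel computation for the elliptic operator P in the paper's Theorems 5.3(ii) and 5.6(ii): the kernel of P h = Δ(e^{2u}Δh) − div(k²∇h) on the torus consists exactly of the constants.) -/

import Mathlib

open MeasureTheory Real

noncomputable section

/-- The Euclidean plane ℝ². -/
abbrev E2 := EuclideanSpace ℝ (Fin 2)

/-- The flat Laplacian Δf = ∂²f/∂ξ₁² + ∂²f/∂ξ₂² on ℝ². -/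
def lap (f : E2 → ℝ) (x : E2) : ℝ :=
  ∑ i : Fin 2,
    fderiv ℝ (fun y => fderiv ℝ f y (EuclideanSpace.single i 1)) x (EuclideanSpace.single i 1)

/-- The gradient of a function on ℝ², as a vector field. -/
def grad2 (f : E2 → ℝ) (x : E2) : E2 :=
  (WithLp.equiv 2 (Fin 2 → ℝ)).symm fun i => fderiv ℝ f x (EuclideanSpace.single i 1)

/-- The divergence div X = ∂X₁/∂ξ₁ + ∂X₂/∂ξ₂ of a vector field on ℝ². -/
def div2 (X : E2 → E2) (x : E2) : ℝ :=
  ∑ i : Fin 2, fderiv ℝ (fun y => X y i) x (EuclideanSpace.single i 1)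

/-- partial derivative in direction of i-th basis vector -/
def pd (f : E2 → ℝ) (i : Fin 2) (y : E2) : ℝ := fderiv ℝ f y (EuclideanSpace.single i 1)

lemma pd_contDiff {f : E2 → ℝ} (hf : ContDiff ℝ (⊤ : ℕ∞) f) (i : Fin 2) :
    ContDiff ℝ (⊤ : ℕ∞) (pd f i) := by
  exact (hf.fderiv_right (by simp)).clm_apply contDiff_const

lemma fderiv_periodic {f : E2 → ℝ} (hf : Differentiable ℝ f) (d : E2)
    (hper : ∀ ξ, f (ξ + d) = f ξ) (x : E2) : fderiv ℝ f (x + d) = fderiv ℝ f x := by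
  have h1 : HasFDerivAt (fun y => f (y + d)) (fderiv ℝ f (x + d)) x := by
    have := ((hf (x + d)).hasFDerivAt).comp x ((hasFDerivAt_id x).add_const d)
    rw [ContinuousLinearMap.comp_id] at this; exact this
  have h2 : (fun y => f (y + d)) = f := funext hper
  rw [h2] at h1
  exact (h1.fderiv).symm

lemma pd_periodic {f : E2 → ℝ} (hf : Differentiable ℝ f) (d : E2)
    (hper : ∀ ξ, f (ξ + d) = f ξ) (i : Fin 2) (x : E2) : pd f i (x + d) = pd f i x := by
  unfold pd; rw [fderiv_periodic hf d hper]




lemma lap_eq (f : E2 → ℝ) (x : E2) : lap f x = ∑ i : Fin 2, pd (pd f i) i x := rfl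

lemma grad2_apply (f : E2 → ℝ) (x : E2) (i : Fin 2) : grad2 f x i = pd f i x := rfl

lemma lap_contDiff {f : E2 → ℝ} (hf : ContDiff ℝ (⊤ : ℕ∞) f) :
    ContDiff ℝ (⊤ : ℕ∞) (lap f) := by
  have : (lap f) = fun x => ∑ i : Fin 2, pd (pd f i) i x := rfl
  rw [this]
  exact ContDiff.sum fun i _ => pd_contDiff (pd_contDiff hf i) i

lemma lap_periodic {f : E2 → ℝ} (hf : ContDiff ℝ (⊤ : ℕ∞) f) (d : E2)
    (hper : ∀ ξ, f (ξ + d) = f ξ) (x : E2) : lap f (x + d) = lap f x := by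
  rw [lap_eq, lap_eq]
  refine Finset.sum_congr rfl fun i _ => ?_
  exact pd_periodic ((pd_contDiff hf i).differentiable (by simp)) d
    (pd_periodic (hf.differentiable (by simp)) d hper i) i x

-- product rule for pd
lemma pd_mul {f g : E2 → ℝ} (hf : ContDiff ℝ (⊤ : ℕ∞) f) (hg : ContDiff ℝ (⊤ : ℕ∞) g)
    (i : Fin 2) (x : E2) :
    pd (fun y => f y * g y) i x = f x * pd g i x + pd f i x * g x := by
  unfold pd
  rw [fderiv_fun_mul (hf.differentiable (by simp) x) (hg.differentiable (by simp) x)]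
  simp [mul_comm]

lemma smul_grad2_apply (φ ψ : E2 → ℝ) (y : E2) (i : Fin 2) :
    (φ y • grad2 ψ y) i = φ y * pd ψ i y := rfl

lemma div2_smul_grad {φ ψ : E2 → ℝ} (hφ : ContDiff ℝ (⊤ : ℕ∞) φ) (hψ : ContDiff ℝ (⊤ : ℕ∞) ψ)
    (x : E2) :
    div2 (fun y => φ y • grad2 ψ y) x
      = (∑ i : Fin 2, pd φ i x * pd ψ i x) + φ x * lap ψ x := by
  unfold div2
  have hc : ∀ i : Fin 2, (fun y => (φ y • grad2 ψ y) i) = fun y => φ y * pd ψ i y :=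
    fun i => rfl
  calc (∑ i : Fin 2, fderiv ℝ (fun y => (φ y • grad2 ψ y) i) x (EuclideanSpace.single i 1))
      = ∑ i : Fin 2, pd (fun y => φ y * pd ψ i y) i x := by
        refine Finset.sum_congr rfl fun i _ => ?_; rw [hc i]; rfl
    _ = ∑ i : Fin 2, (φ x * pd (pd ψ i) i x + pd φ i x * pd ψ i x) := by
        refine Finset.sum_congr rfl fun i _ => ?_
        exact pd_mul hφ (pd_contDiff hψ i) i x
    _ = (∑ i : Fin 2, pd φ i x * pd ψ i x) + φ x * lap ψ x := by
        rw [lap_eq, Finset.sum_add_distrib, Finset.mul_sum]; ring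

lemma ftc_zero {Y Ed : ℝ → ℝ} (hd : ∀ s, HasDerivAt Y (Ed s) s) (hc : Continuous Ed)
    (hp : Y 1 = Y 0) : ∫ s in Set.Icc (0:ℝ) 1, Ed s = 0 := by
  rw [MeasureTheory.integral_Icc_eq_integral_Ioc, ← intervalIntegral.integral_of_le zero_le_one,
    intervalIntegral.integral_eq_sub_of_hasDerivAt (fun x _ => hd x)
      (hc.intervalIntegrable 0 1), hp, sub_self]

lemma square_integral_snd_deriv (Y Ed : ℝ × ℝ → ℝ) (hc : Continuous Ed)
    (hdrv : ∀ p : ℝ × ℝ, HasDerivAt (fun t => Y (p.1, t)) (Ed p) p.2)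
    (hp : ∀ s, Y (s, 1) = Y (s, 0)) :
    ∫ p in (Set.Icc (0:ℝ) 1 ×ˢ Set.Icc (0:ℝ) 1), Ed p = 0 := by
  have hK : IsCompact (Set.Icc (0:ℝ) 1 ×ˢ Set.Icc (0:ℝ) 1) := isCompact_Icc.prod isCompact_Icc
  have hint : IntegrableOn Ed (Set.Icc (0:ℝ) 1 ×ˢ Set.Icc (0:ℝ) 1) volume :=
    hc.continuousOn.integrableOn_compact hK
  rw [MeasureTheory.Measure.volume_eq_prod] at hint ⊢
  rw [MeasureTheory.setIntegral_prod _ hint]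
  have : ∀ x : ℝ, ∫ y in Set.Icc (0:ℝ) 1, Ed (x, y) = 0 := by
    intro x
    exact ftc_zero (Y := fun t => Y (x, t)) (fun t => hdrv (x, t)) (hc.comp (Continuous.prodMk_right x)) (hp x)
  simp [this]

lemma square_integral_fst_deriv (Y Ed : ℝ × ℝ → ℝ) (hc : Continuous Ed)
    (hdrv : ∀ p : ℝ × ℝ, HasDerivAt (fun s => Y (s, p.2)) (Ed p) p.1)
    (hp : ∀ t, Y (1, t) = Y (0, t)) :
    ∫ p in (Set.Icc (0:ℝ) 1 ×ˢ Set.Icc (0:ℝ) 1), Ed p = 0 := by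
  have hswap : ∫ p in (Set.Icc (0:ℝ) 1 ×ˢ Set.Icc (0:ℝ) 1), Ed p
      = ∫ p in (Set.Icc (0:ℝ) 1 ×ˢ Set.Icc (0:ℝ) 1), (Ed ∘ Prod.swap) p := by
    rw [MeasureTheory.Measure.volume_eq_prod]
    have := (MeasureTheory.Measure.measurePreserving_swap
        (μ := (volume : Measure ℝ)) (ν := (volume : Measure ℝ))).setIntegral_preimage_emb
        MeasurableEquiv.prodComm.measurableEmbedding Ed
        (Set.Icc (0:ℝ) 1 ×ˢ Set.Icc (0:ℝ) 1)
    rw [Set.preimage_swap_prod] at this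
    exact this.symm
  rw [hswap]
  exact square_integral_snd_deriv (Y ∘ Prod.swap) (Ed ∘ Prod.swap)
    (hc.comp continuous_swap)
    (fun p => hdrv (p.2, p.1)) (fun s => hp s)

lemma vec_decomp (v : E2) :
    v = v 0 • EuclideanSpace.single (0 : Fin 2) (1:ℝ)
      + v 1 • EuclideanSpace.single (1 : Fin 2) (1:ℝ) := by
  ext i
  fin_cases i <;>
    simp [PiLp.add_apply, PiLp.smul_apply, EuclideanSpace.single_apply, smul_eq_mul]

lemma clm_apply_vec (ℓ : E2 →L[ℝ] ℝ) (v : E2) :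
    ℓ v = v 0 * ℓ (EuclideanSpace.single (0 : Fin 2) (1:ℝ))
        + v 1 * ℓ (EuclideanSpace.single (1 : Fin 2) (1:ℝ)) := by
  conv_lhs => rw [vec_decomp v]
  simp [map_add, _root_.map_smul, smul_eq_mul]

lemma div2_eq_two (X : E2 → E2) (x : E2) :
    div2 X x = pd (fun y => X y 0) 0 x + pd (fun y => X y 1) 1 x := by
  simp [div2, Fin.sum_univ_two, pd]

lemma det_ne_zero_of_li {d₁ d₂ : E2} (hd : LinearIndependent ℝ ![d₁, d₂]) :
    d₁ 0 * d₂ 1 - d₁ 1 * d₂ 0 ≠ 0 := by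
  have hpair := LinearIndependent.pair_iff.mp hd
  intro h0
  have h1 := hpair (d₂ 1) (-(d₁ 1)) (by
    ext i
    fin_cases i <;> simp [PiLp.add_apply, PiLp.smul_apply, smul_eq_mul] <;> linarith [h0])
  have h2 := hpair (d₂ 0) (-(d₁ 0)) (by
    ext i
    fin_cases i <;> simp [PiLp.add_apply, PiLp.smul_apply, smul_eq_mul] <;> linarith [h0])
  have h3 := hpair 1 0 (by
    ext i
    fin_cases i <;>
      simp [PiLp.add_apply, PiLp.smul_apply, smul_eq_mul, h1.1, h2.1,
        neg_eq_zero.mp h1.2, neg_eq_zero.mp h2.2])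
  exact one_ne_zero h3.1

lemma div2_zero_of_nonneg (d₁ d₂ : E2) (hd : LinearIndependent ℝ ![d₁, d₂]) (X : E2 → E2)
    (hX : ∀ i : Fin 2, ContDiff ℝ (⊤ : ℕ∞) fun y => X y i)
    (hp1 : ∀ ξ, X (ξ + d₁) = X ξ) (hp2 : ∀ ξ, X (ξ + d₂) = X ξ)
    (hpos : ∀ ξ, 0 ≤ div2 X ξ) : ∀ ξ, div2 X ξ = 0 := by
  have hdet := det_ne_zero_of_li hd
  set det : ℝ := d₁ 0 * d₂ 1 - d₁ 1 * d₂ 0 with hdetdef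
  set X0 : E2 → ℝ := fun ξ => X ξ 0 with hX0def
  set X1 : E2 → ℝ := fun ξ => X ξ 1 with hX1def
  have hc0 : ContDiff ℝ (⊤ : ℕ∞) X0 := hX 0
  have hc1 : ContDiff ℝ (⊤ : ℕ∞) X1 := hX 1
  have hd0 : Differentiable ℝ X0 := hc0.differentiable (by simp)
  have hd1 : Differentiable ℝ X1 := hc1.differentiable (by simp)
  -- the linear parametrization of the fundamental parallelogram
  set Lm : ℝ × ℝ →L[ℝ] E2 :=
    (ContinuousLinearMap.fst ℝ ℝ ℝ).smulRight d₁ + (ContinuousLinearMap.snd ℝ ℝ ℝ).smulRight d₂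
    with hLmdef
  have hLapp : ∀ p : ℝ × ℝ, Lm p = p.1 • d₁ + p.2 • d₂ := by
    intro p; simp [hLmdef]
  -- derivatives of sections
  have hsec1 : ∀ (F : E2 → ℝ), Differentiable ℝ F → ∀ p : ℝ × ℝ,
      HasDerivAt (fun s => F (Lm (s, p.2))) (fderiv ℝ F (Lm p) d₁) p.1 := by
    intro F hF p
    have h1 : HasDerivAt (fun s : ℝ => (s, p.2)) ((1:ℝ), (0:ℝ)) p.1 :=
      (hasDerivAt_id p.1).prodMk (hasDerivAt_const p.1 p.2)
    have h2 : HasDerivAt (fun s : ℝ => Lm (s, p.2)) (Lm (1, 0)) p.1 :=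
      Lm.hasFDerivAt.comp_hasDerivAt p.1 h1
    have h3 := (hF (Lm (p.1, p.2))).hasFDerivAt.comp_hasDerivAt p.1 h2
    have h4 : Lm ((1:ℝ), (0:ℝ)) = d₁ := by rw [hLapp]; simp
    rw [h4] at h3
    exact h3
  have hsec2 : ∀ (F : E2 → ℝ), Differentiable ℝ F → ∀ p : ℝ × ℝ,
      HasDerivAt (fun t => F (Lm (p.1, t))) (fderiv ℝ F (Lm p) d₂) p.2 := by
    intro F hF p
    have h1 : HasDerivAt (fun t : ℝ => (p.1, t)) ((0:ℝ), (1:ℝ)) p.2 :=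
      (hasDerivAt_const p.2 p.1).prodMk (hasDerivAt_id p.2)
    have h2 : HasDerivAt (fun t : ℝ => Lm (p.1, t)) (Lm (0, 1)) p.2 :=
      Lm.hasFDerivAt.comp_hasDerivAt p.2 h1
    have h3 := (hF (Lm (p.1, p.2))).hasFDerivAt.comp_hasDerivAt p.2 h2
    have h4 : Lm ((0:ℝ), (1:ℝ)) = d₂ := by rw [hLapp]; simp
    rw [h4] at h3
    exact h3
  -- the two pull-back component functions and their partial derivatives
  set Y₁ : ℝ × ℝ → ℝ := fun p => (d₂ 1 * X0 (Lm p) - d₂ 0 * X1 (Lm p)) / det with hY₁def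
  set Ed₁ : ℝ × ℝ → ℝ :=
    fun p => (d₂ 1 * fderiv ℝ X0 (Lm p) d₁ - d₂ 0 * fderiv ℝ X1 (Lm p) d₁) / det with hEd₁def
  set Y₂ : ℝ × ℝ → ℝ := fun p => (-(d₁ 1) * X0 (Lm p) + d₁ 0 * X1 (Lm p)) / det with hY₂def
  set Ed₂ : ℝ × ℝ → ℝ :=
    fun p => (-(d₁ 1) * fderiv ℝ X0 (Lm p) d₂ + d₁ 0 * fderiv ℝ X1 (Lm p) d₂) / det with hEd₂def
  have hfc0' : ∀ v : E2, ContDiff ℝ (⊤ : ℕ∞) fun ξ => fderiv ℝ X0 ξ v :=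
    fun v => (hc0.fderiv_right (by simp)).clm_apply contDiff_const
  have hfc1' : ∀ v : E2, ContDiff ℝ (⊤ : ℕ∞) fun ξ => fderiv ℝ X1 ξ v :=
    fun v => (hc1.fderiv_right (by simp)).clm_apply contDiff_const
  have hfc0 : ∀ v : E2, Continuous fun ξ => fderiv ℝ X0 ξ v := fun v => (hfc0' v).continuous
  have hfc1 : ∀ v : E2, Continuous fun ξ => fderiv ℝ X1 ξ v := fun v => (hfc1' v).continuous
  have hEd₁c : Continuous Ed₁ := by
    apply Continuous.div_const
    exact (continuous_const.mul ((hfc0 d₁).comp Lm.continuous)).sub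
      (continuous_const.mul ((hfc1 d₁).comp Lm.continuous))
  have hEd₂c : Continuous Ed₂ := by
    apply Continuous.div_const
    exact (continuous_const.mul ((hfc0 d₂).comp Lm.continuous)).add
      (continuous_const.mul ((hfc1 d₂).comp Lm.continuous))
  have hder₁ : ∀ p : ℝ × ℝ, HasDerivAt (fun s => Y₁ (s, p.2)) (Ed₁ p) p.1 := by
    intro p
    exact (((hsec1 X0 hd0 p).const_mul (d₂ 1)).sub ((hsec1 X1 hd1 p).const_mul (d₂ 0))).div_const det
  have hder₂ : ∀ p : ℝ × ℝ, HasDerivAt (fun t => Y₂ (p.1, t)) (Ed₂ p) p.2 := by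
    intro p
    exact (((hsec2 X0 hd0 p).const_mul (-(d₁ 1))).add ((hsec2 X1 hd1 p).const_mul (d₁ 0))).div_const det
  -- periodicity of the pullbacks
  have hL1 : ∀ t : ℝ, Lm ((1:ℝ), t) = Lm (0, t) + d₁ := by
    intro t; rw [hLapp, hLapp]; module
  have hL2 : ∀ s : ℝ, Lm (s, (1:ℝ)) = Lm (s, 0) + d₂ := by
    intro s; rw [hLapp, hLapp]; module
  have hY₁per : ∀ t : ℝ, Y₁ (1, t) = Y₁ (0, t) := by
    intro t
    have e0 : X0 (Lm (1, t)) = X0 (Lm (0, t)) := by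
      rw [hL1 t, hX0def]; simp only []; rw [hp1]
    have e1 : X1 (Lm (1, t)) = X1 (Lm (0, t)) := by
      rw [hL1 t, hX1def]; simp only []; rw [hp1]
    simp only [hY₁def, e0, e1]
  have hY₂per : ∀ s : ℝ, Y₂ (s, 1) = Y₂ (s, 0) := by
    intro s
    have e0 : X0 (Lm (s, 1)) = X0 (Lm (s, 0)) := by
      rw [hL2 s, hX0def]; simp only []; rw [hp2]
    have e1 : X1 (Lm (s, 1)) = X1 (Lm (s, 0)) := by
      rw [hL2 s, hX1def]; simp only []; rw [hp2]
    simp only [hY₂def, e0, e1]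
  -- the two half-integrals vanish
  have hI1 : ∫ p in (Set.Icc (0:ℝ) 1 ×ˢ Set.Icc (0:ℝ) 1), Ed₁ p = 0 :=
    square_integral_fst_deriv Y₁ Ed₁ hEd₁c hder₁ hY₁per
  have hI2 : ∫ p in (Set.Icc (0:ℝ) 1 ×ˢ Set.Icc (0:ℝ) 1), Ed₂ p = 0 :=
    square_integral_snd_deriv Y₂ Ed₂ hEd₂c hder₂ hY₂per
  -- the divergence pulls back to Ed₁ + Ed₂
  have hsum : ∀ p : ℝ × ℝ, Ed₁ p + Ed₂ p = div2 X (Lm p) := by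
    intro p
    have e0 := clm_apply_vec (fderiv ℝ X0 (Lm p)) d₁
    have e1 := clm_apply_vec (fderiv ℝ X1 (Lm p)) d₁
    have e2 := clm_apply_vec (fderiv ℝ X0 (Lm p)) d₂
    have e3 := clm_apply_vec (fderiv ℝ X1 (Lm p)) d₂
    rw [div2_eq_two]
    simp only [hEd₁def, hEd₂def, e0, e1, e2, e3]
    unfold pd
    rw [← hX0def, ← hX1def]
    field_simp
    ring
  -- total integral of the divergence over the square is zero
  have hGLc : Continuous fun p : ℝ × ℝ => div2 X (Lm p) := by
    have : Continuous fun ξ => div2 X ξ := by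
      have hrw : (fun ξ => div2 X ξ) = fun ξ =>
          fderiv ℝ X0 ξ (EuclideanSpace.single (0:Fin 2) (1:ℝ))
          + fderiv ℝ X1 ξ (EuclideanSpace.single (1:Fin 2) (1:ℝ)) := by
        funext ξ; rw [div2_eq_two]; rfl
      rw [hrw]
      exact (hfc0 _).add (hfc1 _)
    exact this.comp Lm.continuous
  have hK : IsCompact (Set.Icc (0:ℝ) 1 ×ˢ Set.Icc (0:ℝ) 1) := isCompact_Icc.prod isCompact_Icc
  have hintG : IntegrableOn (fun p : ℝ × ℝ => div2 X (Lm p))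
      (Set.Icc (0:ℝ) 1 ×ˢ Set.Icc (0:ℝ) 1) volume := hGLc.continuousOn.integrableOn_compact hK
  have hItot : ∫ p in (Set.Icc (0:ℝ) 1 ×ˢ Set.Icc (0:ℝ) 1), div2 X (Lm p) = 0 := by
    have h1 : ∫ p in (Set.Icc (0:ℝ) 1 ×ˢ Set.Icc (0:ℝ) 1), div2 X (Lm p)
        = ∫ p in (Set.Icc (0:ℝ) 1 ×ˢ Set.Icc (0:ℝ) 1), (Ed₁ p + Ed₂ p) :=
      MeasureTheory.integral_congr_ae (Filter.Eventually.of_forall fun p => (hsum p).symm)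
    rw [h1, MeasureTheory.integral_add
      (hEd₁c.continuousOn.integrableOn_compact hK) (hEd₂c.continuousOn.integrableOn_compact hK),
      hI1, hI2, add_zero]
  -- conclusion via positivity
  intro ξ
  by_contra hne
  have hξpos : 0 < div2 X ξ := lt_of_le_of_ne (hpos ξ) (Ne.symm hne)
  -- periodicity of div2 X
  have hGper1 : Function.Periodic (div2 X) d₁ := by
    intro ζ
    rw [div2_eq_two, div2_eq_two]
    rw [pd_periodic hd0 d₁ (fun η => by simp only [hX0def]; rw [hp1]) 0 ζ,
      pd_periodic hd1 d₁ (fun η => by simp only [hX1def]; rw [hp1]) 1 ζ]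
  have hGper2 : Function.Periodic (div2 X) d₂ := by
    intro ζ
    rw [div2_eq_two, div2_eq_two]
    rw [pd_periodic hd0 d₂ (fun η => by simp only [hX0def]; rw [hp2]) 0 ζ,
      pd_periodic hd1 d₂ (fun η => by simp only [hX1def]; rw [hp2]) 1 ζ]
  -- bring ξ back to the fundamental square
  set s : ℝ := (d₂ 1 * ξ 0 - d₂ 0 * ξ 1) / det with hsdef
  set t : ℝ := (-(d₁ 1) * ξ 0 + d₁ 0 * ξ 1) / det with htdef
  have hLst : Lm (s, t) = ξ := by
    rw [hLapp]
    ext i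
    fin_cases i <;>
      · simp only [PiLp.add_apply, PiLp.smul_apply, smul_eq_mul, hsdef, htdef, Fin.zero_eta, Fin.mk_one, Fin.isValue]
        field_simp
        rw [hdetdef]
        ring
  set q : ℝ × ℝ := (s - ⌊s⌋, t - ⌊t⌋) with hqdef
  have hLq : Lm q = ξ + (-⌊s⌋ : ℤ) • d₁ + (-⌊t⌋ : ℤ) • d₂ := by
    rw [← Int.cast_smul_eq_zsmul ℝ, ← Int.cast_smul_eq_zsmul ℝ, ← hLst, hLapp, hLapp, hqdef]
    push_cast
    module
  have hGq : div2 X (Lm q) = div2 X ξ := by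
    rw [hLq]
    rw [show ξ + (-⌊s⌋ : ℤ) • d₁ + (-⌊t⌋ : ℤ) • d₂
      = (ξ + (-⌊t⌋ : ℤ) • d₂) + (-⌊s⌋ : ℤ) • d₁ by abel]
    rw [hGper1.zsmul (-⌊s⌋) _, hGper2.zsmul (-⌊t⌋) _]
  -- a small open set where the (continuous) divergence is large
  set c0 : ℝ := div2 X ξ with hc0def
  set U : Set (ℝ × ℝ) := (fun p : ℝ × ℝ => div2 X (Lm p)) ⁻¹' Set.Ioi (c0 / 2) with hUdef
  have hUopen : IsOpen U := isOpen_Ioi.preimage hGLc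
  have hqU : q ∈ U := by
    simp only [hUdef, Set.mem_preimage, Set.mem_Ioi, hGq]
    linarith
  set V : Set (ℝ × ℝ) := U ∩ (Set.Ioo (0:ℝ) 1 ×ˢ Set.Ioo (0:ℝ) 1) with hVdef
  have hVopen : IsOpen V := hUopen.inter ((isOpen_Ioo).prod isOpen_Ioo)
  have hqIco : q ∈ Set.Ico (0:ℝ) 1 ×ˢ Set.Ico (0:ℝ) 1 := by
    constructor <;>
      · constructor
        · simpa [hqdef] using Int.fract_nonneg _
        · simpa [hqdef, Int.self_sub_floor] using Int.fract_lt_one _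
  have hqcl : q ∈ closure (Set.Ioo (0:ℝ) 1 ×ˢ Set.Ioo (0:ℝ) 1) := by
    rw [closure_prod_eq, closure_Ioo (zero_ne_one)]
    exact ⟨Set.Ico_subset_Icc_self hqIco.1, Set.Ico_subset_Icc_self hqIco.2⟩
  have hVne : V.Nonempty := by
    rcases (_root_.mem_closure_iff.mp hqcl) U hUopen hqU with ⟨p, hpU, hpI⟩
    exact ⟨p, hpU, hpI⟩
  have hVS : V ⊆ Set.Icc (0:ℝ) 1 ×ˢ Set.Icc (0:ℝ) 1 := by
    intro p hp
    exact ⟨Set.Ioo_subset_Icc_self hp.2.1, Set.Ioo_subset_Icc_self hp.2.2⟩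
  have hVpos : 0 < volume V := hVopen.measure_pos volume hVne
  have hVfin : volume V < ⊤ := lt_of_le_of_lt (measure_mono hVS) hK.measure_lt_top
  have hle1 : c0 / 2 * (volume V).toReal ≤ ∫ p in V, div2 X (Lm p) := by
    have := MeasureTheory.setIntegral_ge_of_const_le hVopen.measurableSet hVfin.ne
      (fun p hp => le_of_lt hp.1) (hintG.mono_set hVS)
    rw [smul_eq_mul, mul_comm] at this; exact this
  have hle2 : ∫ p in V, div2 X (Lm p) ≤ ∫ p in (Set.Icc (0:ℝ) 1 ×ˢ Set.Icc (0:ℝ) 1), div2 X (Lm p) :=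
    MeasureTheory.setIntegral_mono_set hintG
      (Filter.Eventually.of_forall fun p => hpos (Lm p)) (HasSubset.Subset.eventuallyLE hVS)
  have : (0:ℝ) < c0 / 2 * (volume V).toReal := by
    apply mul_pos (by linarith)
    exact ENNReal.toReal_pos hVpos.ne' hVfin.ne
  rw [hItot] at hle2
  linarith

lemma pd_neg (f : E2 → ℝ) (i : Fin 2) (x : E2) :
    pd (fun y => -(f y)) i x = -pd f i x := by
  unfold pd
  rw [fderiv_fun_neg]
  simp

lemma div2_add {X Y : E2 → E2} {x : E2}
    (hX : ∀ i : Fin 2, DifferentiableAt ℝ (fun y => X y i) x)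
    (hY : ∀ i : Fin 2, DifferentiableAt ℝ (fun y => Y y i) x) :
    div2 (fun y => X y + Y y) x = div2 X x + div2 Y x := by
  unfold div2
  rw [← Finset.sum_add_distrib]
  refine Finset.sum_congr rfl fun i _ => ?_
  have hcomp : (fun y => (X y + Y y) i) = fun y => X y i + Y y i := rfl
  rw [hcomp, fderiv_fun_add (hX i) (hY i)]
  simp

/-- If u, k, h are smooth periodic and Δ(e^{2u}·Δh) = div(k²·∇h) everywhere, then h
is constant.  (Kernel of the operator P in Theorems 5.3(ii) and 5.6(ii).) -/
theorem kernel_of_P_is_constants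
    (d₁ d₂ : E2) (hd : LinearIndependent ℝ ![d₁, d₂])
    (u k h : E2 → ℝ)
    (hu : ContDiff ℝ (⊤ : ℕ∞) u) (hk : ContDiff ℝ (⊤ : ℕ∞) k)
    (hh : ContDiff ℝ (⊤ : ℕ∞) h)
    (hu_per : ∀ ξ : E2, u (ξ + d₁) = u ξ ∧ u (ξ + d₂) = u ξ)
    (hk_per : ∀ ξ : E2, k (ξ + d₁) = k ξ ∧ k (ξ + d₂) = k ξ)
    (hh_per : ∀ ξ : E2, h (ξ + d₁) = h ξ ∧ h (ξ + d₂) = h ξ)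
    (heq : ∀ ξ : E2, lap (fun y => Real.exp (2 * u y) * lap h y) ξ
      = div2 (fun y => (k y) ^ 2 • grad2 h y) ξ) :
    ∃ C : ℝ, ∀ ξ : E2, h ξ = C := by
  classical
  set w : E2 → ℝ := fun y => Real.exp (2 * u y) * lap h y with hwdef
  have hw : ContDiff ℝ (⊤ : ℕ∞) w := ((contDiff_const.mul hu).exp).mul (lap_contDiff hh)
  have hhdiff : Differentiable ℝ h := hh.differentiable (by simp)
  have hwdiff : Differentiable ℝ w := hw.differentiable (by simp)
  have hk2 : ContDiff ℝ (⊤ : ℕ∞) fun y => k y ^ 2 := hk.pow 2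
  have hhk2 : ContDiff ℝ (⊤ : ℕ∞) fun y => h y * k y ^ 2 := hh.mul hk2
  have hw_per1 : ∀ ξ, w (ξ + d₁) = w ξ := fun ξ => by
    simp only [hwdef, (hu_per ξ).1, lap_periodic hh d₁ (fun ζ => (hh_per ζ).1) ξ]
  have hw_per2 : ∀ ξ, w (ξ + d₂) = w ξ := fun ξ => by
    simp only [hwdef, (hu_per ξ).2, lap_periodic hh d₂ (fun ζ => (hh_per ζ).2) ξ]
  have hpdh1 : ∀ (i : Fin 2) ξ, pd h i (ξ + d₁) = pd h i ξ :=
    fun i ξ => pd_periodic hhdiff d₁ (fun ζ => (hh_per ζ).1) i ξ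
  have hpdh2 : ∀ (i : Fin 2) ξ, pd h i (ξ + d₂) = pd h i ξ :=
    fun i ξ => pd_periodic hhdiff d₂ (fun ζ => (hh_per ζ).2) i ξ
  have hpdw1 : ∀ (i : Fin 2) ξ, pd w i (ξ + d₁) = pd w i ξ :=
    fun i ξ => pd_periodic hwdiff d₁ hw_per1 i ξ
  have hpdw2 : ∀ (i : Fin 2) ξ, pd w i (ξ + d₂) = pd w i ξ :=
    fun i ξ => pd_periodic hwdiff d₂ hw_per2 i ξ
  -- the key vector field
  set Z : E2 → E2 := fun y =>
    (w y • grad2 h y + (-(h y)) • grad2 w y) + (h y * k y ^ 2) • grad2 h y with hZdef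
  have hZcomp : ∀ (y : E2) (i : Fin 2),
      Z y i = (w y * pd h i y + (-(h y)) * pd w i y) + (h y * k y ^ 2) * pd h i y := fun y i => rfl
  have hZc : ∀ i : Fin 2, ContDiff ℝ (⊤ : ℕ∞) fun y => Z y i := by
    intro i
    have : (fun y => Z y i)
        = fun y => (w y * pd h i y + (-(h y)) * pd w i y) + (h y * k y ^ 2) * pd h i y := rfl
    rw [this]
    exact ((hw.mul (pd_contDiff hh i)).add (hh.neg.mul (pd_contDiff hw i))).add
      (hhk2.mul (pd_contDiff hh i))
  have hZp1 : ∀ ξ, Z (ξ + d₁) = Z ξ := by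
    intro ξ
    ext i
    rw [hZcomp, hZcomp, hpdh1 i ξ, hpdw1 i ξ, hw_per1 ξ, (hh_per ξ).1, (hk_per ξ).1]
  have hZp2 : ∀ ξ, Z (ξ + d₂) = Z ξ := by
    intro ξ
    ext i
    rw [hZcomp, hZcomp, hpdh2 i ξ, hpdw2 i ξ, hw_per2 ξ, (hh_per ξ).2, (hk_per ξ).2]
  -- the pointwise divergence identity
  have hdivZ : ∀ ξ, div2 Z ξ
      = Real.exp (2 * u ξ) * (lap h ξ) ^ 2 + k ξ ^ 2 * ∑ i : Fin 2, (pd h i ξ) ^ 2 := by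
    intro ξ
    have dA : ∀ i : Fin 2, DifferentiableAt ℝ (fun y => (w y • grad2 h y) i) ξ :=
      fun i => ((hw.mul (pd_contDiff hh i)).differentiable (by simp)) ξ
    have dB : ∀ i : Fin 2, DifferentiableAt ℝ (fun y => ((-(h y)) • grad2 w y) i) ξ :=
      fun i => ((hh.neg.mul (pd_contDiff hw i)).differentiable (by simp)) ξ
    have dC : ∀ i : Fin 2, DifferentiableAt ℝ (fun y => ((h y * k y ^ 2) • grad2 h y) i) ξ :=
      fun i => ((hhk2.mul (pd_contDiff hh i)).differentiable (by simp)) ξ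
    have dAB : ∀ i : Fin 2,
        DifferentiableAt ℝ (fun y => (w y • grad2 h y + (-(h y)) • grad2 w y) i) ξ :=
      fun i => (dA i).add (dB i)
    have hsplit : div2 Z ξ
        = div2 (fun y => w y • grad2 h y) ξ + div2 (fun y => (-(h y)) • grad2 w y) ξ
          + div2 (fun y => (h y * k y ^ 2) • grad2 h y) ξ := by
      rw [hZdef]
      rw [div2_add dAB dC, div2_add dA dB]
    have hA := div2_smul_grad hw hh ξ
    have hB := div2_smul_grad hh.neg hw ξ
    have hC := div2_smul_grad hhk2 hh ξ
    have heq' : lap w ξ = (∑ i : Fin 2, pd (fun y => k y ^ 2) i ξ * pd h i ξ)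
        + k ξ ^ 2 * lap h ξ := (heq ξ).trans (div2_smul_grad hk2 hh ξ)
    rw [hsplit, hA, hB, hC]
    simp only [Fin.sum_univ_two] at heq' ⊢
    rw [pd_neg h 0 ξ, pd_neg h 1 ξ, pd_mul hh hk2 0 ξ, pd_mul hh hk2 1 ξ, heq']
    have hwξ : w ξ = Real.exp (2 * u ξ) * lap h ξ := rfl
    rw [hwξ]
    ring
  have hzero := div2_zero_of_nonneg d₁ d₂ hd Z hZc hZp1 hZp2
    (fun ξ => by rw [hdivZ ξ]; positivity)
  have hlap0 : ∀ ξ, lap h ξ = 0 := by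
    intro ξ
    have h0 := hzero ξ
    rw [hdivZ ξ] at h0
    have h1 : 0 ≤ k ξ ^ 2 * ∑ i : Fin 2, (pd h i ξ) ^ 2 := by positivity
    have h2 : (0:ℝ) < Real.exp (2 * u ξ) := Real.exp_pos _
    have h3 : Real.exp (2 * u ξ) * lap h ξ ^ 2 ≤ 0 := by linarith
    have h4 : lap h ξ ^ 2 ≤ 0 := by
      by_contra hc
      push_neg at hc
      nlinarith
    exact pow_eq_zero_iff two_ne_zero |>.mp (le_antisymm h4 (sq_nonneg _))
  -- second pass : h is harmonic, hence ∇h = 0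
  set Z2 : E2 → E2 := fun y => h y • grad2 h y with hZ2def
  have hZ2comp : ∀ (y : E2) (i : Fin 2), Z2 y i = h y * pd h i y := fun y i => rfl
  have hZ2c : ∀ i : Fin 2, ContDiff ℝ (⊤ : ℕ∞) fun y => Z2 y i :=
    fun i => hh.mul (pd_contDiff hh i)
  have hZ2p1 : ∀ ξ, Z2 (ξ + d₁) = Z2 ξ := by
    intro ξ; ext i; rw [hZ2comp, hZ2comp, hpdh1 i ξ, (hh_per ξ).1]
  have hZ2p2 : ∀ ξ, Z2 (ξ + d₂) = Z2 ξ := by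
    intro ξ; ext i; rw [hZ2comp, hZ2comp, hpdh2 i ξ, (hh_per ξ).2]
  have hdivZ2 : ∀ ξ, div2 Z2 ξ = ∑ i : Fin 2, (pd h i ξ) ^ 2 := by
    intro ξ
    rw [hZ2def, div2_smul_grad hh hh ξ, hlap0 ξ]
    simp [sq]
  have hz2 := div2_zero_of_nonneg d₁ d₂ hd Z2 hZ2c hZ2p1 hZ2p2
    (fun ξ => by rw [hdivZ2 ξ]; positivity)
  have hpd0 : ∀ (ξ : E2) (i : Fin 2), pd h i ξ = 0 := by
    intro ξ i
    have h0 := hz2 ξ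
    rw [hdivZ2 ξ, Fin.sum_univ_two] at h0
    fin_cases i
    · have : (pd h 0 ξ) ^ 2 = 0 := by nlinarith [sq_nonneg (pd h 1 ξ)]
      exact pow_eq_zero_iff two_ne_zero |>.mp this
    · have : (pd h 1 ξ) ^ 2 = 0 := by nlinarith [sq_nonneg (pd h 0 ξ)]
      exact pow_eq_zero_iff two_ne_zero |>.mp this
  have hfd : ∀ ξ, fderiv ℝ h ξ = 0 := by
    intro ξ
    refine ContinuousLinearMap.ext fun v => ?_
    have h0 := hpd0 ξ 0
    have h1 := hpd0 ξ 1
    unfold pd at h0 h1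
    rw [clm_apply_vec (fderiv ℝ h ξ) v, h0, h1]
    simp
  exact ⟨h 0, fun ξ => is_const_of_fderiv_eq_zero hhdiff hfd ξ 0⟩
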